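/- For every K_n, every spline degree p, and every index set α ⊆ {1,…,K_n+p−2}, the matrix F_αF_αᵀ ∈ ℝ^{ℓ×ℓ} is tridiagonal, has nonnegative entries, and is strictly diagonally dominant (each diagonal entry strictly exceeds the sum of the absolute values of the off-diagonal entries in its row). -/

import Mathlib

open Matrix

noncomputable section

/-- The free (breakpoint) coordinates determined by the active set `α`: coordinate `t` is free
iff it is not the middle coordinate of an active second-difference constraint. -/
def freeSet (m : ℕ) (α : Finset (Fin (m - 2))) : Finset (Fin m) :=
  Finset.univ.filter fun t => ∀ i ∈ α, t.val ≠ i.val + 1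

/-- The `j`-th free coordinate, in increasing order (`= m` out of range). -/
def freeIdx (m : ℕ) (α : Finset (Fin (m - 2))) (j : ℕ) : ℕ :=
  if h : j < (freeSet m α).card then (((freeSet m α).orderIsoOfFin rfl) ⟨j, h⟩).1.1 else m

variable {m : ℕ} {α : Finset (Fin (m - 2))}

lemma fi_lt {j : ℕ} (h : j < (freeSet m α).card) : freeIdx m α j < m := by
  rw [freeIdx, dif_pos h]
  exact (((freeSet m α).orderIsoOfFin rfl) ⟨j, h⟩).1.2

lemma fi_eq {j : ℕ} (h : (freeSet m α).card ≤ j) : freeIdx m α j = m := by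
  rw [freeIdx, dif_neg (by omega)]

lemma fi_le {j : ℕ} : freeIdx m α j ≤ m := by
  by_cases h : j < (freeSet m α).card
  · exact (fi_lt h).le
  · rw [fi_eq (by omega)]

lemma fi_smono {j k : ℕ} (hj : j < (freeSet m α).card) (hjk : j < k) :
    freeIdx m α j < freeIdx m α k := by
  by_cases hk : k < (freeSet m α).card
  · rw [freeIdx, dif_pos hj, freeIdx, dif_pos hk]
    exact ((freeSet m α).orderIsoOfFin rfl).strictMono
      (show (⟨j, hj⟩ : Fin _) < ⟨k, hk⟩ from hjk)
  · rw [show freeIdx m α k = m from fi_eq (le_of_not_gt hk)]; exact fi_lt hj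

lemma fi_mono {j k : ℕ} (hjk : j ≤ k) : freeIdx m α j ≤ freeIdx m α k := by
  rcases eq_or_lt_of_le hjk with rfl | h
  · exact le_refl _
  · by_cases hj : j < (freeSet m α).card
    · exact (fi_smono hj h).le
    · rw [fi_eq (le_of_not_gt hj)]
      rw [show freeIdx m α k = m from fi_eq (by omega)]

lemma mem_fi {t : Fin m} (ht : t ∈ freeSet m α) :
    ∃ j, ∃ _ : j < (freeSet m α).card, freeIdx m α j = t.val := by
  set e := (freeSet m α).orderIsoOfFin rfl with he
  refine ⟨(e.symm ⟨t, ht⟩).val, (e.symm ⟨t, ht⟩).isLt, ?_⟩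
  rw [freeIdx, dif_pos (e.symm ⟨t, ht⟩).isLt, ← he]
  have : e ⟨(e.symm ⟨t, ht⟩).val, (e.symm ⟨t, ht⟩).isLt⟩ = ⟨t, ht⟩ := by
    simpa using e.apply_symm_apply ⟨t, ht⟩
  rw [this]

lemma fi_mem {j : ℕ} (h : j < (freeSet m α).card) :
    ∀ i ∈ α, freeIdx m α j ≠ i.val + 1 := by
  have hm := (((freeSet m α).orderIsoOfFin rfl) ⟨j, h⟩).2
  simp only [freeSet, Finset.mem_filter] at hm
  intro i hi
  rw [freeIdx, dif_pos h]
  exact hm.2 i hi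

lemma mem_freeSet_iff {t : Fin m} : t ∈ freeSet m α ↔ ∀ i ∈ α, t.val ≠ i.val + 1 := by
  simp [freeSet]

lemma card_pos (hm : 0 < m) : 0 < (freeSet m α).card := by
  refine Finset.card_pos.mpr ⟨⟨0, hm⟩, mem_freeSet_iff.mpr fun i hi => by
    show (0 : ℕ) ≠ i.val + 1; omega⟩

lemma fi_zero (hm : 0 < m) : freeIdx m α 0 = 0 := by
  obtain ⟨j, hj, hje⟩ := mem_fi (α := α) (t := ⟨0, hm⟩) (mem_freeSet_iff.mpr fun i hi => by
    show (0 : ℕ) ≠ i.val + 1; omega)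
  simp only [Fin.val_mk] at hje
  have := fi_mono (m := m) (α := α) (Nat.zero_le j)
  omega

lemma fi_last (hm : 0 < m) : freeIdx m α ((freeSet m α).card - 1) = m - 1 := by
  have hlast : (⟨m - 1, by omega⟩ : Fin m) ∈ freeSet m α := by
    refine mem_freeSet_iff.mpr fun i hi => ?_
    show m - 1 ≠ i.val + 1
    have := i.isLt; omega
  obtain ⟨j, hj, hje⟩ := mem_fi hlast
  have h1 := fi_mono (m := m) (α := α) (show j ≤ (freeSet m α).card - 1 by omega)
  have h2 := fi_lt (m := m) (α := α) (j := (freeSet m α).card - 1)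
    (by have := card_pos (α := α) hm; omega)
  simp at hje
  omega

lemma bracket (t : Fin m) : ∃ j, j < (freeSet m α).card ∧
    (freeIdx m α j = t.val ∨
      (freeIdx m α j < t.val ∧ t.val < freeIdx m α (j + 1) ∧ j + 1 < (freeSet m α).card)) := by
  have hm : 0 < m := t.pos
  set c := (freeSet m α).card with hc
  have hcpos : 0 < c := card_pos hm
  set T := (Finset.range c).filter (fun j => freeIdx m α j ≤ t.val) with hT
  have hne : T.Nonempty := ⟨0, by simp [hT, fi_zero hm, Finset.mem_filter]; omega⟩
  set j0 := T.max' hne with hj0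
  have hj0T : j0 ∈ T := T.max'_mem hne
  rw [hT, Finset.mem_filter, Finset.mem_range] at hj0T
  obtain ⟨hj0c, hj0le⟩ := hj0T
  refine ⟨j0, hj0c, ?_⟩
  rcases eq_or_lt_of_le hj0le with heq | hlt
  · exact Or.inl heq
  · right
    by_cases hsucc : j0 + 1 < c
    · refine ⟨hlt, ?_, hsucc⟩
      by_contra hge
      have : j0 + 1 ∈ T := by
        rw [hT, Finset.mem_filter, Finset.mem_range]; exact ⟨hsucc, by omega⟩
      have := Finset.le_max' T _ this
      omega
    · exfalso
      have hj0e : j0 = c - 1 := by omega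
      have hfl := fi_last (α := α) hm
      rw [← hc] at hfl
      rw [hj0e] at hlt
      have ht := t.isLt
      omega

/-- The interpolation matrix `F_α ∈ ℝ^{ℓ×m}`, `ℓ = m - |α|`: its `j`-th row is the
piecewise-linear hat function on the grid of free coordinates which equals `1` at the `j`-th
free coordinate and `0` at all other free coordinates, so that `b = F_αᵀ b̃` recovers a vector
satisfying the active constraints from its free values `b̃`. -/
def Fmat (m : ℕ) (α : Finset (Fin (m - 2))) : Matrix (Fin (freeSet m α).card) (Fin m) ℝ :=
  fun j t =>
    if t.val = freeIdx m α j.val then 1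
    else if freeIdx m α j.val < t.val ∧ t.val < freeIdx m α (j.val + 1) then
      ((freeIdx m α (j.val + 1) : ℝ) - (t.val : ℝ)) /
        ((freeIdx m α (j.val + 1) : ℝ) - (freeIdx m α j.val : ℝ))
    else if 0 < j.val ∧ freeIdx m α (j.val - 1) < t.val ∧ t.val < freeIdx m α j.val then
      ((t.val : ℝ) - (freeIdx m α (j.val - 1) : ℝ)) /
        ((freeIdx m α j.val : ℝ) - (freeIdx m α (j.val - 1) : ℝ))
    else 0

lemma F_nonneg (j : Fin (freeSet m α).card) (t : Fin m) : 0 ≤ Fmat m α j t := by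
  rw [Fmat]
  split_ifs with h1 h2 h3
  · norm_num
  · apply div_nonneg <;> [skip; skip] <;>
      · have h2a := h2.1; have h2b := h2.2
        have : (t.val : ℝ) < (freeIdx m α (j.val + 1) : ℝ) := by exact_mod_cast h2b
        have : (freeIdx m α j.val : ℝ) < (t.val : ℝ) := by exact_mod_cast h2a
        linarith
  · obtain ⟨h3a, h3b, h3c⟩ := h3
    apply div_nonneg
    · have : (freeIdx m α (j.val - 1) : ℝ) < (t.val : ℝ) := by exact_mod_cast h3b
      linarith
    · have : (freeIdx m α (j.val - 1) : ℝ) < (t.val : ℝ) := by exact_mod_cast h3b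
      have : (t.val : ℝ) < (freeIdx m α j.val : ℝ) := by exact_mod_cast h3c
      linarith
  · exact le_refl _

lemma F_ub {j : Fin (freeSet m α).card} {t : Fin m} (h : Fmat m α j t ≠ 0) :
    t.val < freeIdx m α (j.val + 1) := by
  rw [Fmat] at h
  split_ifs at h with h1 h2 h3
  · rw [h1]; exact fi_smono j.isLt (by omega)
  · exact h2.2
  · exact lt_trans h3.2.2 (fi_smono j.isLt (by omega))
  · exact absurd rfl h

lemma F_lb {j : Fin (freeSet m α).card} {t : Fin m} (h : Fmat m α j t ≠ 0) :
    freeIdx m α (j.val - 1) ≤ t.val := by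
  rw [Fmat] at h
  split_ifs at h with h1 h2 h3
  · rw [h1]; exact fi_mono (by omega)
  · exact le_trans (fi_mono (by omega)) h2.1.le
  · exact h3.2.1.le
  · exact absurd rfl h

lemma F_eq_zero {j : Fin (freeSet m α).card} {t : Fin m}
    (h1 : t.val ≠ freeIdx m α j.val)
    (h2 : ¬(freeIdx m α j.val < t.val ∧ t.val < freeIdx m α (j.val + 1)))
    (h3 : ¬(0 < j.val ∧ freeIdx m α (j.val - 1) < t.val ∧ t.val < freeIdx m α j.val)) :
    Fmat m α j t = 0 := by
  rw [Fmat, if_neg h1, if_neg h2, if_neg h3]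

lemma partition (t : Fin m) :
    ∑ k : Fin (freeSet m α).card, Fmat m α k t = 1 := by
  obtain ⟨j0, hj0c, hcase⟩ := bracket (α := α) t
  rcases hcase with heq | ⟨hlt, hub, hsucc⟩
  · -- t is the j0-th free coordinate
    rw [Finset.sum_eq_single (⟨j0, hj0c⟩ : Fin _)]
    · rw [Fmat, if_pos (by simpa using heq.symm)]
    · intro k _ hk
      have hkj : k.val ≠ j0 := fun h => hk (Fin.ext h)
      apply F_eq_zero
      · intro h
        rcases lt_or_gt_of_ne hkj with hl | hg
        · have := fi_smono k.isLt hl; omega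
        · have := fi_smono hj0c hg; omega
      · rintro ⟨ha, hb⟩
        rcases lt_or_gt_of_ne hkj with hl | hg
        · have := fi_mono (m := m) (α := α) (show k.val + 1 ≤ j0 by omega); omega
        · have := fi_smono hj0c hg; omega
      · rintro ⟨h0, ha, hb⟩
        rcases lt_or_gt_of_ne hkj with hl | hg
        · have := fi_mono (m := m) (α := α) (show k.val ≤ j0 by omega); omega
        · have := fi_mono (m := m) (α := α) (show j0 ≤ k.val - 1 by omega); omega
    · intro h
      exact absurd (Finset.mem_univ _) h
  · -- t strictly between free coordinates j0 and j0+1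
    have hne : (⟨j0, hj0c⟩ : Fin _) ≠ ⟨j0 + 1, hsucc⟩ := by
      intro h; rw [Fin.mk.injEq] at h; omega
    have hzero : ∀ k : Fin (freeSet m α).card,
        k.val ≠ j0 → k.val ≠ j0 + 1 → Fmat m α k t = 0 := by
      intro k hk1 hk2
      apply F_eq_zero
      · intro h
        rcases lt_or_ge k.val j0 with hl | hg
        · have := fi_mono (m := m) (α := α) (show k.val ≤ j0 by omega); omega
        · have := fi_mono (m := m) (α := α) (show j0 + 1 ≤ k.val by omega); omega
      · rintro ⟨ha, hb⟩
        rcases lt_or_ge k.val j0 with hl | hg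
        · have := fi_mono (m := m) (α := α) (show k.val + 1 ≤ j0 by omega); omega
        · have := fi_mono (m := m) (α := α) (show j0 + 1 ≤ k.val by omega); omega
      · rintro ⟨h0, ha, hb⟩
        rcases lt_or_ge k.val j0 with hl | hg
        · have := fi_mono (m := m) (α := α) (show k.val ≤ j0 by omega); omega
        · have := fi_mono (m := m) (α := α) (show j0 + 1 ≤ k.val - 1 by omega); omega
    have hsub : ∑ k : Fin (freeSet m α).card, Fmat m α k t
        = ∑ k ∈ ({⟨j0, hj0c⟩, ⟨j0 + 1, hsucc⟩} : Finset (Fin (freeSet m α).card)),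
            Fmat m α k t := by
      symm
      apply Finset.sum_subset (Finset.subset_univ _)
      intro k _ hk
      simp only [Finset.mem_insert, Finset.mem_singleton] at hk
      push_neg at hk
      exact hzero k (fun h => hk.1 (Fin.ext h)) (fun h => hk.2 (Fin.ext h))
    rw [hsub, Finset.sum_pair hne]
    have hab : freeIdx m α j0 < freeIdx m α (j0 + 1) := fi_smono hj0c (by omega)
    have hv1 : Fmat m α ⟨j0, hj0c⟩ t
        = ((freeIdx m α (j0 + 1) : ℝ) - (t.val : ℝ)) /
          ((freeIdx m α (j0 + 1) : ℝ) - (freeIdx m α j0 : ℝ)) := by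
      rw [Fmat]
      simp only [Fin.val_mk]
      rw [if_neg (by omega), if_pos ⟨hlt, hub⟩]
    have hv2 : Fmat m α ⟨j0 + 1, hsucc⟩ t
        = ((t.val : ℝ) - (freeIdx m α j0 : ℝ)) /
          ((freeIdx m α (j0 + 1) : ℝ) - (freeIdx m α j0 : ℝ)) := by
      rw [Fmat]
      have e1 : (⟨j0 + 1, hsucc⟩ : Fin (freeSet m α).card).val = j0 + 1 := rfl
      simp only [e1, Nat.add_sub_cancel]
      rw [if_neg (by omega), if_neg (by rintro ⟨h, -⟩; omega), if_pos ⟨by omega, hlt, hub⟩]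
    rw [hv1, hv2]
    have hd : (freeIdx m α j0 : ℝ) < (freeIdx m α (j0 + 1) : ℝ) := by exact_mod_cast hab
    rw [← add_div,
      show ((freeIdx m α (j0 + 1) : ℝ) - (t.val : ℝ)) + ((t.val : ℝ) - (freeIdx m α j0 : ℝ))
        = (freeIdx m α (j0 + 1) : ℝ) - (freeIdx m α j0 : ℝ) by ring,
      div_self (by linarith)]

lemma reflSum (a b : ℕ) (f : ℕ → ℝ) :
    ∑ s ∈ Finset.Ioo a b, f s = ∑ s ∈ Finset.Ioo a b, f (a + b - s) := by
  refine Finset.sum_nbij' (fun s => a + b - s) (fun s => a + b - s) ?_ ?_ ?_ ?_ ?_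
  · intro s hs; simp only [Finset.mem_Ioo] at hs ⊢; omega
  · intro s hs; simp only [Finset.mem_Ioo] at hs ⊢; omega
  · intro s hs; simp only [Finset.mem_Ioo] at hs; omega
  · intro s hs; simp only [Finset.mem_Ioo] at hs; omega
  · intro s hs; simp only [Finset.mem_Ioo] at hs; congr 1; omega

lemma pairRight (a b : ℕ) (hab : a < b) :
    0 ≤ ∑ s ∈ Finset.Ioo a b,
      (2 * (((b : ℝ) - (s : ℝ)) / ((b : ℝ) - (a : ℝ))) ^ 2
        - ((b : ℝ) - (s : ℝ)) / ((b : ℝ) - (a : ℝ))) := by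
  have hab' : (a : ℝ) < (b : ℝ) := by exact_mod_cast hab
  have hD : (b : ℝ) - (a : ℝ) ≠ 0 := by linarith
  set f : ℕ → ℝ := fun s =>
    2 * (((b : ℝ) - (s : ℝ)) / ((b : ℝ) - (a : ℝ))) ^ 2
      - ((b : ℝ) - (s : ℝ)) / ((b : ℝ) - (a : ℝ)) with hf
  have key : ∑ s ∈ Finset.Ioo a b, (f s + f (a + b - s))
      = ∑ s ∈ Finset.Ioo a b, (2 * (((b : ℝ) - (s : ℝ)) / ((b : ℝ) - (a : ℝ))) - 1) ^ 2 := by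
    apply Finset.sum_congr rfl
    intro s hs
    rw [Finset.mem_Ioo] at hs
    have hcast : ((a + b - s : ℕ) : ℝ) = (a : ℝ) + (b : ℝ) - (s : ℝ) := by
      have h1 : s ≤ a + b := by omega
      push_cast [h1]
      ring
    rw [hf]
    simp only [hcast]
    field_simp
    ring
  have h2 : (0 : ℝ) ≤ ∑ s ∈ Finset.Ioo a b, (f s + f (a + b - s)) := by
    rw [key]
    exact Finset.sum_nonneg fun s _ => sq_nonneg _
  rw [Finset.sum_add_distrib, ← reflSum a b f] at h2
  linarith

lemma pairLeft (a b : ℕ) (hab : a < b) :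
    0 ≤ ∑ s ∈ Finset.Ioo a b,
      (2 * (((s : ℝ) - (a : ℝ)) / ((b : ℝ) - (a : ℝ))) ^ 2
        - ((s : ℝ) - (a : ℝ)) / ((b : ℝ) - (a : ℝ))) := by
  set f : ℕ → ℝ := fun s =>
    2 * (((s : ℝ) - (a : ℝ)) / ((b : ℝ) - (a : ℝ))) ^ 2
      - ((s : ℝ) - (a : ℝ)) / ((b : ℝ) - (a : ℝ)) with hf
  rw [reflSum a b f]
  have : ∑ s ∈ Finset.Ioo a b, f (a + b - s)
      = ∑ s ∈ Finset.Ioo a b,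
        (2 * (((b : ℝ) - (s : ℝ)) / ((b : ℝ) - (a : ℝ))) ^ 2
          - ((b : ℝ) - (s : ℝ)) / ((b : ℝ) - (a : ℝ))) := by
    apply Finset.sum_congr rfl
    intro s hs
    rw [Finset.mem_Ioo] at hs
    have hcast : ((a + b - s : ℕ) : ℝ) = (a : ℝ) + (b : ℝ) - (s : ℝ) := by
      have h1 : s ≤ a + b := by omega
      push_cast [h1]
      ring
    rw [hf]
    simp only [hcast]
    ring_nf
  rw [this]
  exact pairRight a b hab

lemma filter_sum {m : ℕ} (a b : ℕ) (hb : b ≤ m) (f : ℕ → ℝ) :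
    ∑ t ∈ Finset.univ.filter (fun t : Fin m => a < t.val ∧ t.val < b), f t.val
      = ∑ s ∈ Finset.Ioo a b, f s := by
  rw [Finset.sum_filter]
  rw [Fin.sum_univ_eq_sum_range (fun i => if a < i ∧ i < b then f i else 0) m]
  rw [← Finset.sum_filter]
  congr 1
  ext s
  simp only [Finset.mem_filter, Finset.mem_range, Finset.mem_Ioo]
  omega

lemma rowPos (j : Fin (freeSet m α).card) :
    0 < ∑ t : Fin m, (2 * Fmat m α j t ^ 2 - Fmat m α j t) := by
  set a := freeIdx m α j.val with ha
  set b := freeIdx m α (j.val + 1) with hb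
  set a' := freeIdx m α (j.val - 1) with ha'
  have hab : a < b := fi_smono j.isLt (by omega)
  have ham : a < m := fi_lt j.isLt
  have hbm : b ≤ m := fi_le
  have ha'a : a' ≤ a := fi_mono (by omega)
  set t0 : Fin m := ⟨a, ham⟩ with ht0
  have ht0v : t0.val = a := rfl
  set R : Finset (Fin m) := Finset.univ.filter (fun t => a < t.val ∧ t.val < b) with hR
  set L : Finset (Fin m) :=
    Finset.univ.filter (fun t => 0 < j.val ∧ a' < t.val ∧ t.val < a) with hL
  have step1 : ∑ t : Fin m, (2 * Fmat m α j t ^ 2 - Fmat m α j t)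
      = ∑ t ∈ insert t0 (R ∪ L), (2 * Fmat m α j t ^ 2 - Fmat m α j t) := by
    symm
    apply Finset.sum_subset (Finset.subset_univ _)
    intro t _ ht
    have h1 : t ≠ t0 := fun h => ht (by rw [h]; exact Finset.mem_insert_self _ _)
    have h2 : t ∉ R := fun h =>
      ht (Finset.mem_insert_of_mem (Finset.mem_union_left _ h))
    have h3 : t ∉ L := fun h =>
      ht (Finset.mem_insert_of_mem (Finset.mem_union_right _ h))
    have h2' : ¬(a < t.val ∧ t.val < b) := fun hh =>
      h2 (by rw [hR, Finset.mem_filter]; exact ⟨Finset.mem_univ t, hh⟩)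
    have h3' : ¬(0 < j.val ∧ a' < t.val ∧ t.val < a) := fun hh =>
      h3 (by rw [hL, Finset.mem_filter]; exact ⟨Finset.mem_univ t, hh⟩)
    have hF : Fmat m α j t = 0 := by
      apply F_eq_zero
      · rw [← ha]; intro h; exact h1 (Fin.ext (by rw [h, ht0v]))
      · rw [← ha, ← hb]; exact h2'
      · rw [← ha, ← ha']; exact h3'
    rw [hF]; ring
  have ht0RL : t0 ∉ R ∪ L := by
    intro hmem
    rw [Finset.mem_union] at hmem
    rcases hmem with h | h
    · rw [hR, Finset.mem_filter, ht0v] at h; omega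
    · rw [hL, Finset.mem_filter, ht0v] at h; omega
  have hRL : Disjoint R L := by
    rw [Finset.disjoint_left]
    intro t htR htL
    rw [hR, Finset.mem_filter] at htR
    rw [hL, Finset.mem_filter] at htL
    omega
  rw [step1, Finset.sum_insert ht0RL, Finset.sum_union hRL]
  have hd1 : Fmat m α j t0 = 1 := by rw [Fmat, if_pos (by rw [ht0v, ha])]
  have hRsum : (0:ℝ) ≤ ∑ t ∈ R, (2 * Fmat m α j t ^ 2 - Fmat m α j t) := by
    have hval : ∑ t ∈ R, (2 * Fmat m α j t ^ 2 - Fmat m α j t)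
        = ∑ t ∈ R, (fun s : ℕ =>
            2 * (((b : ℝ) - (s : ℝ)) / ((b : ℝ) - (a : ℝ))) ^ 2
              - ((b : ℝ) - (s : ℝ)) / ((b : ℝ) - (a : ℝ))) t.val := by
      apply Finset.sum_congr rfl
      intro t htR
      rw [hR, Finset.mem_filter] at htR
      have hF : Fmat m α j t = ((b : ℝ) - (t.val : ℝ)) / ((b : ℝ) - (a : ℝ)) := by
        rw [Fmat]
        rw [← ha, ← hb]
        rw [if_neg (by omega), if_pos ⟨htR.2.1, htR.2.2⟩]
      rw [hF]
    have heq := filter_sum (m := m) a b hbm (fun s : ℕ =>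
      2 * (((b : ℝ) - (s : ℝ)) / ((b : ℝ) - (a : ℝ))) ^ 2
        - ((b : ℝ) - (s : ℝ)) / ((b : ℝ) - (a : ℝ)))
    rw [hval, hR, heq]
    exact pairRight a b hab
  have hLsum : (0:ℝ) ≤ ∑ t ∈ L, (2 * Fmat m α j t ^ 2 - Fmat m α j t) := by
    rcases Nat.eq_zero_or_pos j.val with hj0 | hj0
    · have hLempty : L = ∅ := by
        rw [hL]
        apply Finset.filter_false_of_mem
        intro t _
        omega
      rw [hLempty, Finset.sum_empty]
    · have ha'lt : a' < a := fi_smono (by omega) (by omega)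
      have hval : ∑ t ∈ L, (2 * Fmat m α j t ^ 2 - Fmat m α j t)
          = ∑ t ∈ Finset.univ.filter (fun t : Fin m => a' < t.val ∧ t.val < a),
              (fun s : ℕ =>
                2 * (((s : ℝ) - (a' : ℝ)) / ((a : ℝ) - (a' : ℝ))) ^ 2
                  - ((s : ℝ) - (a' : ℝ)) / ((a : ℝ) - (a' : ℝ))) t.val := by
        have hLeq : L = Finset.univ.filter (fun t : Fin m => a' < t.val ∧ t.val < a) := by
          rw [hL]
          apply Finset.filter_congr
          intro t _
          simp [hj0]
        rw [hLeq]
        apply Finset.sum_congr rfl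
        intro t htL
        rw [Finset.mem_filter] at htL
        have hF : Fmat m α j t
            = ((t.val : ℝ) - (a' : ℝ)) / ((a : ℝ) - (a' : ℝ)) := by
          rw [Fmat]
          rw [← ha, ← hb, ← ha']
          rw [if_neg (by omega), if_neg (by rintro ⟨h, -⟩; omega),
            if_pos ⟨hj0, htL.2.1, htL.2.2⟩]
        rw [hF]
      have heq := filter_sum (m := m) a' a (le_of_lt ham) (fun s : ℕ =>
        2 * (((s : ℝ) - (a' : ℝ)) / ((a : ℝ) - (a' : ℝ))) ^ 2
          - ((s : ℝ) - (a' : ℝ)) / ((a : ℝ) - (a' : ℝ)))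
      rw [hval, heq]
      exact pairLeft a' a ha'lt
  rw [hd1]
  nlinarith [hRsum, hLsum]

/-- Lemma 6.1.  For every `K_n`, spline degree `p` and index set
`α ⊆ {1,…,K_n+p-2}`, the matrix `F_α F_αᵀ` is tridiagonal, nonnegative, and strictly
diagonally dominant. -/
theorem stmt2 (K p : ℕ) (α : Finset (Fin (K + p - 2))) :
    (∀ j k : Fin (freeSet (K + p) α).card,
        (j.val + 2 ≤ k.val ∨ k.val + 2 ≤ j.val) →
        (Fmat (K + p) α * (Fmat (K + p) α)ᵀ) j k = 0) ∧
    (∀ j k : Fin (freeSet (K + p) α).card,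
        0 ≤ (Fmat (K + p) α * (Fmat (K + p) α)ᵀ) j k) ∧
    (∀ j : Fin (freeSet (K + p) α).card,
        ∑ k ∈ Finset.univ.erase j, |(Fmat (K + p) α * (Fmat (K + p) α)ᵀ) j k| <
          (Fmat (K + p) α * (Fmat (K + p) α)ᵀ) j j) := by
  have tri : ∀ j k : Fin (freeSet (K + p) α).card,
      (j.val + 2 ≤ k.val ∨ k.val + 2 ≤ j.val) →
      (Fmat (K + p) α * (Fmat (K + p) α)ᵀ) j k = 0 := by
    intro j k h
    rw [Matrix.mul_apply]
    apply Finset.sum_eq_zero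
    intro t _
    rw [Matrix.transpose_apply]
    by_contra hne
    have hne2 : Fmat (K + p) α j t ≠ 0 ∧ Fmat (K + p) α k t ≠ 0 := by
      constructor <;> intro h0 <;> apply hne <;> rw [h0] <;> ring
    replace hne := hne2
    rcases h with h | h
    · have h1 := F_ub hne.1
      have h2 := F_lb hne.2
      have h3 := fi_mono (m := K + p) (α := α) (show j.val + 1 ≤ k.val - 1 by omega)
      omega
    · have h1 := F_ub hne.2
      have h2 := F_lb hne.1
      have h3 := fi_mono (m := K + p) (α := α) (show k.val + 1 ≤ j.val - 1 by omega)
      omega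
  have nonneg : ∀ j k : Fin (freeSet (K + p) α).card,
      0 ≤ (Fmat (K + p) α * (Fmat (K + p) α)ᵀ) j k := by
    intro j k
    rw [Matrix.mul_apply]
    apply Finset.sum_nonneg
    intro t _
    rw [Matrix.transpose_apply]
    exact mul_nonneg (F_nonneg j t) (F_nonneg k t)
  refine ⟨tri, nonneg, ?_⟩
  intro j
  have habs : ∀ k ∈ Finset.univ.erase j,
      |(Fmat (K + p) α * (Fmat (K + p) α)ᵀ) j k|
        = (Fmat (K + p) α * (Fmat (K + p) α)ᵀ) j k :=
    fun k _ => abs_of_nonneg (nonneg j k)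
  rw [Finset.sum_congr rfl habs]
  have hrow : ∑ k : Fin (freeSet (K + p) α).card,
      (Fmat (K + p) α * (Fmat (K + p) α)ᵀ) j k
        = ∑ t : Fin (K + p), Fmat (K + p) α j t := by
    simp only [Matrix.mul_apply, Matrix.transpose_apply]
    rw [Finset.sum_comm]
    apply Finset.sum_congr rfl
    intro t _
    rw [← Finset.mul_sum, partition t, mul_one]
  have hdiag : (Fmat (K + p) α * (Fmat (K + p) α)ᵀ) j j
      = ∑ t : Fin (K + p), Fmat (K + p) α j t ^ 2 := by
    rw [Matrix.mul_apply]
    apply Finset.sum_congr rfl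
    intro t _
    rw [Matrix.transpose_apply]
    ring
  have herase : ∑ k ∈ Finset.univ.erase j,
      (Fmat (K + p) α * (Fmat (K + p) α)ᵀ) j k
        = (∑ k : Fin (freeSet (K + p) α).card,
            (Fmat (K + p) α * (Fmat (K + p) α)ᵀ) j k)
          - (Fmat (K + p) α * (Fmat (K + p) α)ᵀ) j j := by
    rw [Finset.sum_erase_eq_sub (Finset.mem_univ j)]
  rw [herase, hrow, hdiag]
  have hpos := rowPos (m := K + p) (α := α) j
  have hsplit : ∑ t : Fin (K + p), (2 * Fmat (K + p) α j t ^ 2 - Fmat (K + p) α j t)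
      = 2 * (∑ t : Fin (K + p), Fmat (K + p) α j t ^ 2)
        - ∑ t : Fin (K + p), Fmat (K + p) α j t := by
    rw [Finset.sum_sub_distrib, Finset.mul_sum]
  rw [hsplit] at hpos
  linarith

end
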